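/- Let X be a module over the commutative ring Λ = ℤ[t,s,r]/I where I is the ideal generated by s² − s(1−tr), 1 − t², 1 − r², (t+r)s, and (1−r)s. Then B(x,y) = (ty + sx, rx) defines an involutory birack structure on X: B is invertible, (τ₀B)² = id, the components of τ₀BΔ are bijections, and B satisfies the set-theoretic Yang–Baxter equation. -/
import Mathlib


open MvPolynomial

def sw {X : Type*} : X × X → X × X := fun p => (p.2, p.1)

def lmap {X : Type*} (B : X × X → X × X) : X × X × X → X × X × X :=
  fun p => ((B (p.1, p.2.1)).1, (B (p.1, p.2.1)).2, p.2.2)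

def rmap {X : Type*} (B : X × X → X × X) : X × X × X → X × X × X :=
  fun p => (p.1, B p.2)

def YBE {X : Type*} (B : X × X → X × X) : Prop :=
  lmap B ∘ rmap B ∘ lmap B = rmap B ∘ lmap B ∘ rmap B

/-- The ideal I = (s² − s(1−tr), 1−t², 1−r², (t+r)s, (1−r)s) in ℤ[t,s,r],
with t = X 0, s = X 1, r = X 2. -/
noncomputable def relIdeal : Ideal (MvPolynomial (Fin 3) ℤ) :=
  Ideal.span
    {X 1 ^ 2 - X 1 * (1 - X 0 * X 2), 1 - X 0 ^ 2, 1 - X 2 ^ 2,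
      (X 0 + X 2) * X 1, (1 - X 2) * X 1}

/-- Λ = ℤ[t,s,r]/I. -/
abbrev Lam : Type := MvPolynomial (Fin 3) ℤ ⧸ relIdeal

noncomputable def tΛ : Lam := Ideal.Quotient.mk relIdeal (X 0)
noncomputable def sΛ : Lam := Ideal.Quotient.mk relIdeal (X 1)
noncomputable def rΛ : Lam := Ideal.Quotient.mk relIdeal (X 2)

lemma mkrel {p : MvPolynomial (Fin 3) ℤ}
    (h : p ∈ ({X 1 ^ 2 - X 1 * (1 - X 0 * X 2), 1 - X 0 ^ 2, 1 - X 2 ^ 2,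
      (X 0 + X 2) * X 1, (1 - X 2) * X 1} : Set (MvPolynomial (Fin 3) ℤ))) :
    Ideal.Quotient.mk relIdeal p = 0 :=
  Ideal.Quotient.eq_zero_iff_mem.mpr (Ideal.subset_span h)

lemma ht : tΛ * tΛ = 1 := by
  have h := mkrel (p := 1 - X 0 ^ 2) (by simp)
  rw [map_sub, map_one, map_pow, pow_two] at h
  have h' : (1 : Lam) - tΛ * tΛ = 0 := h
  linear_combination -h'

lemma hr : rΛ * rΛ = 1 := by
  have h := mkrel (p := 1 - X 2 ^ 2) (by simp)
  rw [map_sub, map_one, map_pow, pow_two] at h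
  have h' : (1 : Lam) - rΛ * rΛ = 0 := h
  linear_combination -h'

lemma hrs : rΛ * sΛ = sΛ := by
  have h := mkrel (p := (1 - X 2) * X 1) (by simp)
  rw [map_mul, map_sub, map_one] at h
  have h' : (1 - rΛ) * sΛ = 0 := h
  linear_combination -h'

lemma hts : tΛ * sΛ = -sΛ := by
  have h := mkrel (p := (X 0 + X 2) * X 1) (by simp)
  rw [map_mul, map_add] at h
  have h' : (tΛ + rΛ) * sΛ = 0 := h
  linear_combination h' - hrs

lemma hss : sΛ * sΛ = 2 * sΛ := by
  have h := mkrel (p := X 1 ^ 2 - X 1 * (1 - X 0 * X 2)) (by simp)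
  rw [map_sub, map_mul, map_sub, map_one, map_mul, map_pow, pow_two] at h
  have h1 : sΛ * sΛ - sΛ * (1 - tΛ * rΛ) = 0 := h
  have h2 : tΛ * rΛ * sΛ = -sΛ := by rw [mul_assoc, hrs, hts]
  linear_combination h1 - h2

/-- For any module M over Λ = ℤ[t,s,r]/I, the map B(x,y) = (ty + sx, rx)
is an involutory birack structure on M. -/
theorem stmt3 (M : Type*) [AddCommGroup M] [Module Lam M] :
    letI B : M × M → M × M := fun p => (tΛ • p.2 + sΛ • p.1, rΛ • p.1)
    Function.Bijective B ∧
      (sw ∘ B) ∘ (sw ∘ B) = id ∧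
      Function.Bijective (fun x : M => ((sw ∘ B) (x, x)).1) ∧
      Function.Bijective (fun x : M => ((sw ∘ B) (x, x)).2) ∧
      YBE B := by
  refine ?_
  refine ⟨?_, ?_, ?_, ?_, ?_⟩
  · refine Function.bijective_iff_has_inverse.mpr
      ⟨fun p => (rΛ • p.2, tΛ • p.1 + sΛ • p.2), fun p => ?_, fun p => ?_⟩
    · show (rΛ • rΛ • p.1, tΛ • (tΛ • p.2 + sΛ • p.1) + sΛ • rΛ • p.1) = p
      refine Prod.ext ?_ ?_
      · match_scalars <;> linear_combination hr
      · match_scalars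
        · linear_combination ht
        · linear_combination hts + hrs
    · show (tΛ • (tΛ • p.1 + sΛ • p.2) + sΛ • rΛ • p.2, rΛ • rΛ • p.2) = p
      refine Prod.ext ?_ ?_
      · match_scalars
        · linear_combination ht
        · linear_combination hts + hrs
      · match_scalars <;> linear_combination hr
  · funext p
    show (rΛ • rΛ • p.1, tΛ • (tΛ • p.2 + sΛ • p.1) + sΛ • rΛ • p.1) = p
    refine Prod.ext ?_ ?_
    · match_scalars <;> linear_combination hr
    · match_scalars
      · linear_combination ht
      · linear_combination hts + hrs
  · refine Function.bijective_iff_has_inverse.mpr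
      ⟨fun x => rΛ • x, fun x => ?_, fun x => ?_⟩ <;>
    · show rΛ • rΛ • x = x
      match_scalars; linear_combination hr
  · refine Function.bijective_iff_has_inverse.mpr
      ⟨fun x => tΛ • x + sΛ • x, fun x => ?_, fun x => ?_⟩ <;>
    · show tΛ • (tΛ • x + sΛ • x) + sΛ • (tΛ • x + sΛ • x) = x
      match_scalars
      linear_combination ht + 2 * hts + hss
  · funext p
    obtain ⟨x, y, z⟩ := p
    simp only [YBE, Function.comp_apply, lmap, rmap]
    refine Prod.ext ?_ (Prod.ext ?_ ?_) <;> match_scalars <;> try ring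
    linear_combination hts * rΛ + hss - hrs
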